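/- Let V and W be finite-dimensional real inner product spaces of grid functions with pointwise products, let B : V →ₗ[ℝ] W be a linear map (the discrete gradient) with adjoint B* : W →ₗ[ℝ] V, let Δh : V →ₗ[ℝ] V be symmetric and G = Δh∘Δh + 2a·Δh + α·id for reals a, α. Let Δt ∈ ℝ, M̄ ∈ W, q̄, φⁿ, φⁿ⁺¹, qⁿ, qⁿ⁺¹ ∈ V satisfy: μ = G((φⁿ+φⁿ⁺¹)/2) + (1/2)·((qⁿ+qⁿ⁺¹)/2)*q̄, φⁿ⁺¹ - φⁿ = -Δt·B*(M̄*(Bμ)), and qⁿ⁺¹ - qⁿ = q̄*(φⁿ⁺¹ - φⁿ). Then the discrete energy Fᵏ = (1/2)⟨φᵏ,Gφᵏ⟩ + (1/4)⟨qᵏ,qᵏ⟩ satisfies Fⁿ⁺¹ - Fⁿ = -Δt·⟨Bμ, M̄*(Bμ)⟩_W; in particular Fⁿ⁺¹ ≤ Fⁿ when Δt ≥ 0 and M̄ is pointwise nonnegative (energy dissipation law of the fully discrete EQ scheme for the Cahn–Hilliard model, Scheme 4.3). -/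
import Mathlib


/-- Energy dissipation law of the fully discrete EQ scheme for the
Cahn–Hilliard model (Scheme 4.3). -/
theorem discrete_energy_dissipation_CH_EQ
    (N K : ℕ) (hN : 0 < N) (hK : 0 < K)
    (wV wW : ℝ) (hwV : 0 < wV) (hwW : 0 < wW)
    (ipV : (Fin N → ℝ) → (Fin N → ℝ) → ℝ)
    (hipV : ∀ f g, ipV f g = wV * ∑ i, f i * g i)
    (ipW : (Fin K → ℝ) → (Fin K → ℝ) → ℝ)
    (hipW : ∀ f g, ipW f g = wW * ∑ i, f i * g i)
    (B : (Fin N → ℝ) →ₗ[ℝ] (Fin K → ℝ))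
    (Bstar : (Fin K → ℝ) →ₗ[ℝ] (Fin N → ℝ))
    (hadj : ∀ (f : Fin N → ℝ) (g : Fin K → ℝ), ipW (B f) g = ipV f (Bstar g))
    (Δh : (Fin N → ℝ) →ₗ[ℝ] (Fin N → ℝ))
    (hsym : ∀ f g, ipV (Δh f) g = ipV f (Δh g))
    (a α : ℝ) (G : (Fin N → ℝ) → (Fin N → ℝ))
    (hG : ∀ f, G f = Δh (Δh f) + (2 * a) • Δh f + α • f)
    (Δt : ℝ) (Mbar : Fin K → ℝ) (qbar phin phin1 qn qn1 mu : Fin N → ℝ)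
    (hmu : mu = G ((1 / 2 : ℝ) • (phin + phin1)) +
      (1 / 2 : ℝ) • (((1 / 2 : ℝ) • (qn + qn1)) * qbar))
    (hphi : phin1 - phin = (-Δt) • Bstar (Mbar * B mu))
    (hq : qn1 - qn = qbar * (phin1 - phin))
    (Fn Fn1 : ℝ)
    (hFn : Fn = (1 / 2) * ipV phin (G phin) + (1 / 4) * ipV qn qn)
    (hFn1 : Fn1 = (1 / 2) * ipV phin1 (G phin1) + (1 / 4) * ipV qn1 qn1) :
    Fn1 - Fn = -Δt * ipW (B mu) (Mbar * B mu) ∧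
    (0 ≤ Δt → (∀ i, 0 ≤ Mbar i) → Fn1 ≤ Fn) := by
  -- bilinearity lemmas for ipV
  have ipV_add_l : ∀ f g h : Fin N → ℝ, ipV (f + g) h = ipV f h + ipV g h := by
    intro f g h
    simp [hipV, Pi.add_apply, add_mul, Finset.sum_add_distrib, mul_add]
  have ipV_add_r : ∀ f g h : Fin N → ℝ, ipV f (g + h) = ipV f g + ipV f h := by
    intro f g h
    simp [hipV, Pi.add_apply, mul_add, Finset.sum_add_distrib]
  have ipV_sub_r : ∀ f g h : Fin N → ℝ, ipV f (g - h) = ipV f g - ipV f h := by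
    intro f g h
    simp [hipV, Pi.sub_apply, mul_sub, Finset.sum_sub_distrib]
  have ipV_smul_l : ∀ (c : ℝ) (f g : Fin N → ℝ), ipV (c • f) g = c * ipV f g := by
    intro c f g
    rw [hipV, hipV, Finset.mul_sum, Finset.mul_sum, Finset.mul_sum]
    exact Finset.sum_congr rfl fun i _ => by simp [Pi.smul_apply, smul_eq_mul]; ring
  have ipV_smul_r : ∀ (c : ℝ) (f g : Fin N → ℝ), ipV f (c • g) = c * ipV f g := by
    intro c f g
    rw [hipV, hipV, Finset.mul_sum, Finset.mul_sum, Finset.mul_sum]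
    exact Finset.sum_congr rfl fun i _ => by simp [Pi.smul_apply, smul_eq_mul]; ring
  have ipV_comm : ∀ f g : Fin N → ℝ, ipV f g = ipV g f := by
    intro f g; simp [hipV, mul_comm]
  have ipV_mul : ∀ f g h : Fin N → ℝ, ipV (f * g) h = ipV f (g * h) := by
    intro f g h; simp [hipV, Pi.mul_apply, mul_assoc]
  -- G is linear
  have hGadd : ∀ f g, G (f + g) = G f + G g := by
    intro f g
    simp only [hG, map_add, smul_add]
    abel
  have hGsmul : ∀ (c : ℝ) f, G (c • f) = c • G f := by
    intro c f
    simp only [hG, map_smul, smul_add, smul_smul, mul_comm]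
  -- G is self-adjoint with respect to ipV
  have hGsym : ∀ f g, ipV (G f) g = ipV f (G g) := by
    intro f g
    simp only [hG]
    rw [ipV_add_l, ipV_add_l, ipV_add_r, ipV_add_r, ipV_smul_l, ipV_smul_r,
      hsym, hsym, hsym]
    have : ipV (α • f) g = α * ipV f g := ipV_smul_l α f g
    have h2 : ipV f (α • g) = α * ipV f g := ipV_smul_r α f g
    rw [this, h2]
  -- telescoping of the quadratic forms
  set s : Fin N → ℝ := phin + phin1 with hs
  set d : Fin N → ℝ := phin1 - phin with hd
  have key1 : ipV phin1 (G phin1) - ipV phin (G phin) = ipV (G s) d := by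
    rw [hs, hGadd, ipV_add_l, hd, ipV_sub_r, ipV_sub_r]
    have c1 : ipV (G phin) phin1 = ipV phin1 (G phin) := ipV_comm _ _
    have c2 : ipV (G phin) phin = ipV phin (G phin) := ipV_comm _ _
    have c3 : ipV (G phin1) phin1 = ipV phin1 (G phin1) := ipV_comm _ _
    have c4 : ipV (G phin1) phin = ipV phin (G phin1) := ipV_comm _ _
    have cross : ipV phin1 (G phin) = ipV phin (G phin1) := by
      rw [← c1, hGsym]
    rw [c1, c2, c3, c4, cross]
    ring
  have key2 : ipV qn1 qn1 - ipV qn qn = ipV (qn + qn1) (qn1 - qn) := by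
    rw [ipV_add_l, ipV_sub_r, ipV_sub_r, ipV_comm qn qn1]
    ring
  -- energy difference equals ipV mu d
  have hdiff : Fn1 - Fn = ipV mu d := by
    have hmu' : ipV mu d = (1 / 2) * ipV (G s) d
        + (1 / 4) * ipV ((qn + qn1) * qbar) d := by
      rw [hmu, ipV_add_l]
      have e1 : ipV (G ((1 / 2 : ℝ) • s)) d = (1 / 2) * ipV (G s) d := by
        rw [hGsmul, ipV_smul_l]
      have e2 : (((1 / 2 : ℝ) • (qn + qn1)) * qbar)
          = (1 / 2 : ℝ) • ((qn + qn1) * qbar) := by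
        rw [smul_mul_assoc]
      rw [e1, e2, ipV_smul_l, ipV_smul_l]
      ring
    have hq' : ipV (qn + qn1) (qn1 - qn) = ipV ((qn + qn1) * qbar) d := by
      rw [hq]
      exact (ipV_mul _ _ _).symm
    rw [hFn1, hFn, hmu']
    have : (1 / 2) * ipV phin1 (G phin1) + 1 / 4 * ipV qn1 qn1
        - ((1 / 2) * ipV phin (G phin) + 1 / 4 * ipV qn qn)
        = (1 / 2) * (ipV phin1 (G phin1) - ipV phin (G phin))
          + (1 / 4) * (ipV qn1 qn1 - ipV qn qn) := by ring
    rw [this, key1, key2, hq']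
  -- the dissipation identity
  have main : Fn1 - Fn = -Δt * ipW (B mu) (Mbar * B mu) := by
    rw [hdiff, hphi, ipV_smul_r, ← hadj]
  refine ⟨main, fun hΔt hM => ?_⟩
  have hpos : 0 ≤ ipW (B mu) (Mbar * B mu) := by
    rw [hipW]
    apply mul_nonneg (le_of_lt hwW)
    apply Finset.sum_nonneg
    intro i _
    have : (B mu) i * (Mbar * B mu) i = Mbar i * ((B mu) i)^2 := by
      simp [Pi.mul_apply]; ring
    rw [this]
    exact mul_nonneg (hM i) (sq_nonneg _)
  have : Fn1 - Fn ≤ 0 := by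
    rw [main]
    have : 0 ≤ Δt * ipW (B mu) (Mbar * B mu) := mul_nonneg hΔt hpos
    linarith
  linarith
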